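/- Let H be the Marchenko–Pastur law with γ > 1 and σ > 0. Suppose ρ ∈ [0, 1/λ₊) satisfies ∫ σ⁴/((1 − ρs)²(s + σ²)) dH(s) = ε² with ε² ≥ 2σ⁴/(λ₋ + σ²). Then ρ ≥ (1 − 1/√2)/λ₊, and consequently (ρ²/γ)∫ σ⁴ s/((1 − ρs)²(s + σ²)) dH(s) ≥ ((1 − 1/√2)² λ₋ / (λ₊² γ)) · ε². -/

import Mathlib

open MeasureTheory Real Filter

/-- Lower edge `λ₋ = (1 − 1/√γ)²` of the Marchenko–Pastur law. -/
noncomputable def lamM (γ : ℝ) : ℝ := (1 - 1 / Real.sqrt γ) ^ 2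

/-- Upper edge `λ₊ = (1 + 1/√γ)²` of the Marchenko–Pastur law. -/
noncomputable def lamP (γ : ℝ) : ℝ := (1 + 1 / Real.sqrt γ) ^ 2

/-- The Marchenko–Pastur law with aspect ratio `γ > 1`:
`dH(s) = (γ/(2π))·√((λ₊ − s)(s − λ₋))/s · 𝟙_{[λ₋,λ₊]}(s) ds`. -/
noncomputable def MPlaw (γ : ℝ) : Measure ℝ :=
  MeasureTheory.volume.withDensity fun s =>
    ENNReal.ofReal (if lamM γ ≤ s ∧ s ≤ lamP γ then
      γ / (2 * Real.pi) * Real.sqrt ((lamP γ - s) * (s - lamM γ)) / s else 0)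

section Aux

open Set intervalIntegral

private theorem mp_integral {a b : ℝ} (ha : 0 < a) (hab : a < b) :
    ∫ s in a..b, Real.sqrt ((b - s) * (s - a)) / s
      = Real.pi * ((a + b) / 2 - Real.sqrt (a * b)) := by
  set g := Real.sqrt (a * b) with hg_def
  have hb : 0 < b := ha.trans hab
  have hba : 0 < b - a := sub_pos.2 hab
  have hgpos : 0 < g := Real.sqrt_pos.2 (by positivity)
  have hg2 : g ^ 2 = a * b := Real.sq_sqrt (by positivity)
  set F : ℝ → ℝ := fun s => Real.sqrt ((b - s) * (s - a))
      + (a + b) / 2 * Real.arcsin ((2 * s - (a + b)) / (b - a))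
      - g * Real.arcsin (((a + b) * s - 2 * (a * b)) / ((b - a) * s)) with hF_def
  have hderiv : ∀ x ∈ Ioo a b,
      HasDerivAt F (Real.sqrt ((b - x) * (x - a)) / x) x := by
    intro x hx
    obtain ⟨hxa, hxb⟩ := hx
    have hx0 : 0 < x := ha.trans hxa
    have hQ : 0 < (b - x) * (x - a) := by nlinarith
    set q := Real.sqrt ((b - x) * (x - a)) with hq_def
    have hqpos : 0 < q := Real.sqrt_pos.2 hQ
    have hq2 : q ^ 2 = (b - x) * (x - a) := Real.sq_sqrt hQ.le
    -- first piece
    have h1 : HasDerivAt (fun s : ℝ => Real.sqrt ((b - s) * (s - a)))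
        ((-1 * (x - a) + (b - x) * 1) / (2 * q)) x := by
      have hpoly : HasDerivAt (fun s : ℝ => (b - s) * (s - a))
          (-1 * (x - a) + (b - x) * 1) x :=
        (((hasDerivAt_id x).const_sub b).mul ((hasDerivAt_id x).sub_const a))
      exact hpoly.sqrt hQ.ne'
    -- second piece
    have hu1 : HasDerivAt (fun s : ℝ => (2 * s - (a + b)) / (b - a))
        (2 / (b - a)) x := by
      have : HasDerivAt (fun s : ℝ => 2 * s - (a + b)) 2 x := by
        simpa using ((hasDerivAt_id x).const_mul 2).sub_const (a + b)
      simpa using this.div_const (b - a)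
    have hu1sq : 1 - ((2 * x - (a + b)) / (b - a)) ^ 2 = (2 * q / (b - a)) ^ 2 := by
      field_simp
      nlinarith [hq2]
    have hu1sqrt : Real.sqrt (1 - ((2 * x - (a + b)) / (b - a)) ^ 2)
        = 2 * q / (b - a) := by
      rw [hu1sq, Real.sqrt_sq (by positivity)]
    have hu1pos : 0 < 1 - ((2 * x - (a + b)) / (b - a)) ^ 2 := by
      rw [hu1sq]; positivity
    have h2 : HasDerivAt (fun s : ℝ => Real.arcsin ((2 * s - (a + b)) / (b - a)))
        (1 / Real.sqrt (1 - ((2 * x - (a + b)) / (b - a)) ^ 2) * (2 / (b - a))) x := by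
      refine (Real.hasDerivAt_arcsin ?_ ?_).comp x hu1
      · intro h; rw [h] at hu1pos; norm_num at hu1pos
      · intro h; rw [h] at hu1pos; norm_num at hu1pos
    -- third piece
    have hvx : (b - a) * x ≠ 0 := by positivity
    have hu2 : HasDerivAt (fun s : ℝ => ((a + b) * s - 2 * (a * b)) / ((b - a) * s))
        (((a + b) * ((b - a) * x) - ((a + b) * x - 2 * (a * b)) * (b - a))
          / ((b - a) * x) ^ 2) x := by
      have hnum : HasDerivAt (fun s : ℝ => (a + b) * s - 2 * (a * b)) (a + b) x := by
        simpa using ((hasDerivAt_id x).const_mul (a + b)).sub_const (2 * (a * b))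
      have hden : HasDerivAt (fun s : ℝ => (b - a) * s) (b - a) x := by
        simpa using (hasDerivAt_id x).const_mul (b - a)
      exact hnum.div hden hvx
    have hu2sq : 1 - (((a + b) * x - 2 * (a * b)) / ((b - a) * x)) ^ 2
        = (2 * g * q / ((b - a) * x)) ^ 2 := by
      field_simp
      nlinarith [hq2, hg2]
    have hu2sqrt : Real.sqrt (1 - (((a + b) * x - 2 * (a * b)) / ((b - a) * x)) ^ 2)
        = 2 * g * q / ((b - a) * x) := by
      rw [hu2sq, Real.sqrt_sq (by positivity)]
    have hu2pos : 0 < 1 - (((a + b) * x - 2 * (a * b)) / ((b - a) * x)) ^ 2 := by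
      rw [hu2sq]; positivity
    have h3 : HasDerivAt (fun s : ℝ =>
        Real.arcsin (((a + b) * s - 2 * (a * b)) / ((b - a) * s)))
        (1 / Real.sqrt (1 - (((a + b) * x - 2 * (a * b)) / ((b - a) * x)) ^ 2)
          * (((a + b) * ((b - a) * x) - ((a + b) * x - 2 * (a * b)) * (b - a))
          / ((b - a) * x) ^ 2)) x := by
      refine (Real.hasDerivAt_arcsin ?_ ?_).comp x hu2
      · intro h; rw [h] at hu2pos; norm_num at hu2pos
      · intro h; rw [h] at hu2pos; norm_num at hu2pos
    have := (h1.add (h2.const_mul ((a + b) / 2))).sub (h3.const_mul g)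
    refine this.congr_deriv (Eq.symm ?_)
    rw [hu1sqrt, hu2sqrt]
    have e3 : g * (1 / (2 * g * q / ((b - a) * x))
        * (((a + b) * ((b - a) * x) - ((a + b) * x - 2 * (a * b)) * (b - a))
          / ((b - a) * x) ^ 2)) = a * b / (q * x) := by
      field_simp
      ring
    rw [e3]
    field_simp
    linear_combination 2 * hq2
  have hcont : ContinuousOn F (Icc a b) := by
    apply ContinuousOn.sub
    apply ContinuousOn.add
    · exact (Real.continuous_sqrt.comp (by fun_prop)).continuousOn
    · exact (continuous_const.mul (Real.continuous_arcsin.comp (by fun_prop))).continuousOn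
    · refine continuous_const.continuousOn.mul (Real.continuous_arcsin.comp_continuousOn ?_)
      refine ContinuousOn.div (by fun_prop) (by fun_prop) ?_
      intro x hx
      have : 0 < x := lt_of_lt_of_le ha hx.1
      positivity
  have hint : IntervalIntegrable (fun s => Real.sqrt ((b - s) * (s - a)) / s)
      MeasureTheory.volume a b := by
    apply ContinuousOn.intervalIntegrable
    rw [uIcc_of_le hab.le]
    refine ContinuousOn.div (Real.continuous_sqrt.comp (by fun_prop)).continuousOn
      continuousOn_id ?_
    intro x hx; exact (lt_of_lt_of_le ha hx.1).ne'
  have key := intervalIntegral.integral_eq_sub_of_hasDeriv_right_of_le hab.le hcont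
    (fun x hx => (hderiv x hx).hasDerivWithinAt) hint
  rw [key]
  have hFb : F b = (a + b) / 2 * (Real.pi / 2) - g * (Real.pi / 2) := by
    simp only [hF_def]
    rw [show (2 * b - (a + b)) / (b - a) = 1 by field_simp; ring,
      show ((a + b) * b - 2 * (a * b)) / ((b - a) * b) = 1 by field_simp; ring,
      Real.arcsin_one]
    simp
  have hFa : F a = (a + b) / 2 * (-(Real.pi / 2)) - g * (-(Real.pi / 2)) := by
    simp only [hF_def]
    rw [show (2 * a - (a + b)) / (b - a) = -1 by field_simp; ring,
      show ((a + b) * a - 2 * (a * b)) / ((b - a) * a) = -1 by field_simp; ring,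
      Real.arcsin_neg_one]
    simp
  rw [hFb, hFa]; ring


private lemma lamM_pos {γ : ℝ} (hγ : 1 < γ) : 0 < lamM γ := by
  have h1 : Real.sqrt 1 < Real.sqrt γ := Real.sqrt_lt_sqrt zero_le_one hγ
  rw [Real.sqrt_one] at h1
  have : 1 / Real.sqrt γ < 1 := by rw [div_lt_one (by linarith)]; exact h1
  have : 1 - 1 / Real.sqrt γ > 0 := by linarith
  unfold lamM; positivity

private lemma lamM_lt_lamP {γ : ℝ} (hγ : 1 < γ) : lamM γ < lamP γ := by
  have h1 : Real.sqrt 1 < Real.sqrt γ := Real.sqrt_lt_sqrt zero_le_one hγ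
  rw [Real.sqrt_one] at h1
  have h2 : 0 < 1 / Real.sqrt γ := by positivity
  have h3 : 1 / Real.sqrt γ < 1 := by rw [div_lt_one (by linarith)]; exact h1
  unfold lamM lamP; nlinarith

private lemma lamP_pos {γ : ℝ} (hγ : 1 < γ) : 0 < lamP γ := (lamM_pos hγ).trans (lamM_lt_lamP hγ)

private lemma density_meas (γ : ℝ) : Measurable (fun s : ℝ => (if lamM γ ≤ s ∧ s ≤ lamP γ then
      γ / (2 * Real.pi) * Real.sqrt ((lamP γ - s) * (s - lamM γ)) / s else 0)) := by
  have hset : MeasurableSet {s : ℝ | lamM γ ≤ s ∧ s ≤ lamP γ} := by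
    convert measurableSet_Icc (a := lamM γ) (b := lamP γ) using 1
    rfl
  exact Measurable.ite hset
    ((by fun_prop : Measurable fun s : ℝ =>
        γ / (2 * Real.pi) * Real.sqrt ((lamP γ - s) * (s - lamM γ))).div measurable_id)
    measurable_const

private lemma density_eq_indicator (γ : ℝ) : (fun s : ℝ => (if lamM γ ≤ s ∧ s ≤ lamP γ then
      γ / (2 * Real.pi) * Real.sqrt ((lamP γ - s) * (s - lamM γ)) / s else 0))
    = Set.indicator (Icc (lamM γ) (lamP γ))
      (fun s => γ / (2 * Real.pi) * Real.sqrt ((lamP γ - s) * (s - lamM γ)) / s) := by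
  funext s
  by_cases h : lamM γ ≤ s ∧ s ≤ lamP γ <;>
    simp [Set.indicator, Set.mem_Icc, h]

private lemma density_nonneg (γ : ℝ) (hγ : 1 < γ) (s : ℝ) :
    0 ≤ (if lamM γ ≤ s ∧ s ≤ lamP γ then
      γ / (2 * Real.pi) * Real.sqrt ((lamP γ - s) * (s - lamM γ)) / s else 0) := by
  by_cases h : lamM γ ≤ s ∧ s ≤ lamP γ
  · simp only [h, if_true]
    have hs : 0 < s := lt_of_lt_of_le (lamM_pos hγ) h.1
    have := Real.pi_pos
    positivity
  · simp [h]

private lemma mp_mass {γ : ℝ} (hγ : 1 < γ) : MPlaw γ Set.univ = 1 := by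
  have ha := lamM_pos hγ
  have hab := lamM_lt_lamP hγ
  have hπ := Real.pi_pos
  set a := lamM γ
  set b := lamP γ
  have hcont : ContinuousOn
      (fun s => γ / (2 * Real.pi) * Real.sqrt ((b - s) * (s - a)) / s) (Icc a b) := by
    refine ContinuousOn.div (by fun_prop) continuousOn_id ?_
    intro x hx; exact (lt_of_lt_of_le ha hx.1).ne'
  have hintg : Integrable (fun s : ℝ => (if a ≤ s ∧ s ≤ b then
      γ / (2 * Real.pi) * Real.sqrt ((b - s) * (s - a)) / s else 0)) := by
    rw [density_eq_indicator]
    rw [integrable_indicator_iff measurableSet_Icc]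
    exact hcont.integrableOn_Icc
  rw [MPlaw, withDensity_apply _ MeasurableSet.univ, setLIntegral_univ]
  rw [← MeasureTheory.ofReal_integral_eq_lintegral_ofReal hintg
    (Filter.Eventually.of_forall (density_nonneg γ hγ))]
  have hval : ∫ s : ℝ, (if a ≤ s ∧ s ≤ b then
      γ / (2 * Real.pi) * Real.sqrt ((b - s) * (s - a)) / s else 0) = 1 := by
    rw [density_eq_indicator, MeasureTheory.integral_indicator measurableSet_Icc,
      MeasureTheory.integral_Icc_eq_integral_Ioc, ← intervalIntegral.integral_of_le hab.le]
    have : ∀ s : ℝ, γ / (2 * Real.pi) * Real.sqrt ((b - s) * (s - a)) / s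
        = γ / (2 * Real.pi) * (Real.sqrt ((b - s) * (s - a)) / s) := by
      intro s; ring
    change ∫ x in a..b, γ / (2 * Real.pi) * Real.sqrt ((b - x) * (x - a)) / x = 1
    simp_rw [this]
    rw [intervalIntegral.integral_const_mul, mp_integral ha hab]
    -- now: γ/(2π) * (π * ((a+b)/2 - √(a*b))) = 1
    have hsγ : Real.sqrt γ > 1 := by
      have := Real.sqrt_lt_sqrt zero_le_one hγ; rwa [Real.sqrt_one] at this
    have hsγ2 : Real.sqrt γ ^ 2 = γ := Real.sq_sqrt (by linarith)
    have ht2 : (1/Real.sqrt γ)^2 = 1/γ := by rw [div_pow, one_pow, hsγ2]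
    have hsum : (a + b) / 2 = 1 + 1 / γ := by
      show ((1 - 1/Real.sqrt γ)^2 + (1 + 1/Real.sqrt γ)^2)/2 = 1 + 1/γ
      rw [← ht2]; ring
    have hprod : a * b = (1 - 1/γ)^2 := by
      show (1 - 1/Real.sqrt γ)^2 * (1 + 1/Real.sqrt γ)^2 = (1 - 1/γ)^2
      rw [← ht2]; ring
    have hsqrtprod : Real.sqrt (a * b) = 1 - 1/γ := by
      rw [hprod, Real.sqrt_sq (by rw [sub_nonneg, div_le_one (by linarith)]; linarith)]
    rw [hsum, hsqrtprod]
    have : (1 + 1/γ) - (1 - 1/γ) = 2/γ := by ring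
    rw [this]
    field_simp
  rw [hval, ENNReal.ofReal_one]

private lemma mp_ae_mem {γ : ℝ} (hγ : 1 < γ) :
    ∀ᵐ s ∂(MPlaw γ), s ∈ Icc (lamM γ) (lamP γ) := by
  rw [MPlaw, ae_withDensity_iff (density_meas γ).ennreal_ofReal]
  refine Filter.Eventually.of_forall fun x hx => ?_
  by_contra hmem
  apply hx
  rw [Set.mem_Icc] at hmem
  simp [hmem]

end Aux

/-- If `ρ ∈ [0, 1/λ₊)` solves `∫ σ⁴/((1 − ρs)²(s + σ²)) dH(s) = ε²` with
`ε² ≥ 2σ⁴/(λ₋ + σ²)`, then `ρ ≥ (1 − 1/√2)/λ₊` and the limiting cost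
`(ρ²/γ)∫ σ⁴s/((1 − ρs)²(s + σ²)) dH(s)` is at least `((1 − 1/√2)²λ₋/(λ₊²γ))·ε²`. -/
theorem stmt13 (γ σ ρ ε2 : ℝ) (hγ : 1 < γ) (hσ : 0 < σ)
    (hρ : ρ ∈ Set.Ico 0 (1 / lamP γ))
    (heq : ∫ s, σ ^ 4 / ((1 - ρ * s) ^ 2 * (s + σ ^ 2)) ∂(MPlaw γ) = ε2)
    (hε : 2 * σ ^ 4 / (lamM γ + σ ^ 2) ≤ ε2) :
    (1 - 1 / Real.sqrt 2) / lamP γ ≤ ρ ∧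
    ((1 - 1 / Real.sqrt 2) ^ 2 * lamM γ / (lamP γ ^ 2 * γ)) * ε2 ≤
      (ρ ^ 2 / γ) * ∫ s, σ ^ 4 * s / ((1 - ρ * s) ^ 2 * (s + σ ^ 2)) ∂(MPlaw γ) := by
  obtain ⟨hρ0, hρb⟩ := hρ
  have ha := lamM_pos hγ
  have hb := lamP_pos hγ
  have hab := lamM_lt_lamP hγ
  set a := lamM γ with ha_def
  set b := lamP γ with hb_def
  haveI : IsProbabilityMeasure (MPlaw γ) := ⟨mp_mass hγ⟩
  have hmem := mp_ae_mem hγ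
  have hρb1 : ρ * b < 1 := by
    rw [lt_div_iff₀ hb] at hρb; linarith
  have ht : 0 < 1 - ρ * b := by linarith
  set M : ℝ := σ ^ 4 / ((1 - ρ * b) ^ 2 * (a + σ ^ 2)) with hM_def
  have hM : 0 < M := by positivity
  -- pointwise bounds on the support
  have hbound : ∀ s ∈ Set.Icc a b,
      0 ≤ σ ^ 4 / ((1 - ρ * s) ^ 2 * (s + σ ^ 2)) ∧
      σ ^ 4 / ((1 - ρ * s) ^ 2 * (s + σ ^ 2)) ≤ M ∧
      a * (σ ^ 4 / ((1 - ρ * s) ^ 2 * (s + σ ^ 2)))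
        ≤ σ ^ 4 * s / ((1 - ρ * s) ^ 2 * (s + σ ^ 2)) ∧
      0 ≤ σ ^ 4 * s / ((1 - ρ * s) ^ 2 * (s + σ ^ 2)) ∧
      σ ^ 4 * s / ((1 - ρ * s) ^ 2 * (s + σ ^ 2)) ≤ b * M := by
    intro s hs
    obtain ⟨hs1, hs2⟩ := hs
    have hspos : 0 < s := lt_of_lt_of_le ha hs1
    have hts : 0 < 1 - ρ * s := by nlinarith
    have hσs : 0 < s + σ ^ 2 := by positivity
    have hfpos : 0 < σ ^ 4 / ((1 - ρ * s) ^ 2 * (s + σ ^ 2)) := by positivity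
    have hfM : σ ^ 4 / ((1 - ρ * s) ^ 2 * (s + σ ^ 2)) ≤ M := by
      rw [hM_def]
      gcongr σ ^ 4 / ?_
      have h1 : 1 - ρ * b ≤ 1 - ρ * s := by nlinarith
      have h2 : a + σ ^ 2 ≤ s + σ ^ 2 := by linarith
      have h3 : (1 - ρ * b) ^ 2 ≤ (1 - ρ * s) ^ 2 := by nlinarith
      exact mul_le_mul h3 h2 (by positivity) (by positivity)
    have hgf : σ ^ 4 * s / ((1 - ρ * s) ^ 2 * (s + σ ^ 2))
        = s * (σ ^ 4 / ((1 - ρ * s) ^ 2 * (s + σ ^ 2))) := by ring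
    refine ⟨hfpos.le, hfM, ?_, ?_, ?_⟩
    · rw [hgf]
      exact mul_le_mul_of_nonneg_right hs1 hfpos.le
    · rw [hgf]; positivity
    · rw [hgf]
      calc s * (σ ^ 4 / ((1 - ρ * s) ^ 2 * (s + σ ^ 2)))
          ≤ b * (σ ^ 4 / ((1 - ρ * s) ^ 2 * (s + σ ^ 2))) :=
            mul_le_mul_of_nonneg_right hs2 hfpos.le
        _ ≤ b * M := mul_le_mul_of_nonneg_left hfM hb.le
  -- integrability
  have hfmeas : AEStronglyMeasurable
      (fun s => σ ^ 4 / ((1 - ρ * s) ^ 2 * (s + σ ^ 2))) (MPlaw γ) :=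
    (measurable_const.div (by fun_prop)).aestronglyMeasurable
  have hgmeas : AEStronglyMeasurable
      (fun s => σ ^ 4 * s / ((1 - ρ * s) ^ 2 * (s + σ ^ 2))) (MPlaw γ) :=
    ((by fun_prop : Measurable fun s : ℝ => σ ^ 4 * s).div (by fun_prop)).aestronglyMeasurable
  have hf_int : Integrable (fun s => σ ^ 4 / ((1 - ρ * s) ^ 2 * (s + σ ^ 2))) (MPlaw γ) := by
    refine Integrable.mono' (integrable_const M) hfmeas ?_
    filter_upwards [hmem] with s hs
    rw [Real.norm_eq_abs, abs_of_nonneg (hbound s hs).1]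
    exact (hbound s hs).2.1
  have hg_int : Integrable (fun s => σ ^ 4 * s / ((1 - ρ * s) ^ 2 * (s + σ ^ 2))) (MPlaw γ) := by
    refine Integrable.mono' (integrable_const (b * M)) hgmeas ?_
    filter_upwards [hmem] with s hs
    rw [Real.norm_eq_abs, abs_of_nonneg (hbound s hs).2.2.2.1]
    exact (hbound s hs).2.2.2.2
  -- ε2 ≤ M
  have hεM : ε2 ≤ M := by
    rw [← heq]
    calc ∫ s, σ ^ 4 / ((1 - ρ * s) ^ 2 * (s + σ ^ 2)) ∂(MPlaw γ)
        ≤ ∫ _, M ∂(MPlaw γ) := by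
          refine integral_mono_ae hf_int (integrable_const M) ?_
          filter_upwards [hmem] with s hs
          exact (hbound s hs).2.1
      _ = M := by simp
  -- part 1
  have hca : 0 < a + σ ^ 2 := by positivity
  have h2t : 2 * (1 - ρ * b) ^ 2 ≤ 1 := by
    have h := hε.trans hεM
    rw [hM_def, div_le_div_iff₀ hca (by positivity)] at h
    nlinarith [pow_pos hσ 4, mul_pos (pow_pos hσ 4) hca]
  have hsqrt2 : (0:ℝ) < Real.sqrt 2 := Real.sqrt_pos.2 two_pos
  have hs22 : Real.sqrt 2 ^ 2 = 2 := Real.sq_sqrt (by norm_num)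
  have h1 : 1 - ρ * b ≤ 1 / Real.sqrt 2 := by
    rw [le_div_iff₀ hsqrt2]
    have hu2 : ((1 - ρ * b) * Real.sqrt 2) ^ 2 = 2 * (1 - ρ * b) ^ 2 := by
      rw [mul_pow, hs22]; ring
    nlinarith [sq_nonneg ((1 - ρ * b) * Real.sqrt 2 - 1)]
  have part1 : (1 - 1 / Real.sqrt 2) / b ≤ ρ := by
    rw [div_le_iff₀ hb]; linarith
  refine ⟨part1, ?_⟩
  -- part 2
  have hε2pos : 0 < ε2 :=
    lt_of_lt_of_le (by positivity : (0:ℝ) < 2 * σ ^ 4 / (a + σ ^ 2)) hε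
  have hρnn : 0 ≤ 1 - 1 / Real.sqrt 2 := by
    rw [sub_nonneg, div_le_one hsqrt2]
    nlinarith
  have hIg : a * ε2 ≤ ∫ s, σ ^ 4 * s / ((1 - ρ * s) ^ 2 * (s + σ ^ 2)) ∂(MPlaw γ) := by
    have h0 : a * ε2 = ∫ s, a * (σ ^ 4 / ((1 - ρ * s) ^ 2 * (s + σ ^ 2))) ∂(MPlaw γ) := by
      rw [MeasureTheory.integral_const_mul, heq]
    rw [h0]
    refine integral_mono_ae (hf_int.const_mul a) hg_int ?_
    filter_upwards [hmem] with s hs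
    exact (hbound s hs).2.2.1
  have hγ0 : (0:ℝ) < γ := by linarith
  have hc : ((1 - 1 / Real.sqrt 2) / b) ^ 2 ≤ ρ ^ 2 :=
    pow_le_pow_left₀ (div_nonneg hρnn hb.le) part1 2
  have hpos : 0 ≤ a * ε2 / γ := by positivity
  calc ((1 - 1 / Real.sqrt 2) ^ 2 * a / (b ^ 2 * γ)) * ε2
      = ((1 - 1 / Real.sqrt 2) / b) ^ 2 * (a * ε2 / γ) := by
        rw [div_pow]; ring
    _ ≤ ρ ^ 2 * (a * ε2 / γ) := mul_le_mul_of_nonneg_right hc hpos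
    _ = (ρ ^ 2 / γ) * (a * ε2) := by ring
    _ ≤ (ρ ^ 2 / γ) * ∫ s, σ ^ 4 * s / ((1 - ρ * s) ^ 2 * (s + σ ^ 2)) ∂(MPlaw γ) :=
        mul_le_mul_of_nonneg_left hIg (by positivity)
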